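/- Let A be an n×n positive semidefinite Hermitian complex matrix with one-dimensional kernel spanned by a unit vector z, and suppose the largest eigenvalue of A + z z^H equals 1. Then the spectral radius of z z^H − (I − A) is strictly less than 1. -/

import Mathlib

open Matrix ComplexOrder

lemma vecMulVec_mulVec_aux {n : ℕ} (z v : Fin n → ℂ) :
    (Matrix.vecMulVec z (star z)) *ᵥ v = (star z ⬝ᵥ v) • z := by
  ext i
  simp [Matrix.mulVec, Matrix.vecMulVec_apply, dotProduct, Finset.mul_sum, mul_comm,
    mul_left_comm]

theorem stmt_4 (n : ℕ) (A : Matrix (Fin n) (Fin n) ℂ) (z : Fin n → ℂ)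
    (hA : A.PosSemidef)
    (hz : star z ⬝ᵥ z = 1)
    (hker : A.mulVec z = 0)
    (hker1 : ∀ v, A.mulVec v = 0 → ∃ c : ℂ, v = c • z)
    (hH : (A + Matrix.vecMulVec z (star z)).IsHermitian)
    (hmax_le : ∀ i, hH.eigenvalues i ≤ 1)
    (hmax_eq : ∃ i, hH.eigenvalues i = 1) :
    ∀ μ ∈ spectrum ℂ (Matrix.vecMulVec z (star z) - (1 - A)), ‖μ‖ < 1 := by
  intro μ hμ
  set B := A + Matrix.vecMulVec z (star z) with hB
  -- B is positive definite
  have hBpd : B.PosDef := by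
    refine Matrix.PosDef.of_dotProduct_mulVec_pos hH fun v hv => ?_
    have hBv : B *ᵥ v = A *ᵥ v + (star z ⬝ᵥ v) • z := by
      rw [hB, Matrix.add_mulVec, vecMulVec_mulVec_aux]
    have hsplit : star v ⬝ᵥ B *ᵥ v
        = star v ⬝ᵥ A *ᵥ v + (star z ⬝ᵥ v) * (star v ⬝ᵥ z) := by
      rw [hBv, dotProduct_add, dotProduct_smul, smul_eq_mul]
    have hconj : star v ⬝ᵥ z = star (star z ⬝ᵥ v) := by
      simp [dotProduct, mul_comm, Finset.sum_comm]
    have h1 : (0 : ℂ) ≤ star v ⬝ᵥ A *ᵥ v := hA.dotProduct_mulVec_nonneg v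
    have h2 : (0 : ℂ) ≤ (star z ⬝ᵥ v) * (star v ⬝ᵥ z) := by
      rw [hconj]
      exact mul_star_self_nonneg _
    rcases lt_or_eq_of_le h1 with h1' | h1'
    · rw [hsplit]
      exact lt_of_lt_of_le h1' (le_add_of_nonneg_right h2)
    rcases lt_or_eq_of_le h2 with h2' | h2'
    · rw [hsplit]
      exact lt_of_lt_of_le h2' (le_add_of_nonneg_left (le_of_eq h1'))
    exfalso
    have hAv : A *ᵥ v = 0 := (hA.dotProduct_mulVec_zero_iff v).mp h1'.symm
    obtain ⟨c, rfl⟩ := hker1 v hAv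
    have hc : star z ⬝ᵥ (c • z) = c := by
      rw [dotProduct_smul, hz, smul_eq_mul, mul_one]
    have hzero : (star z ⬝ᵥ (c • z)) * (star (c • z) ⬝ᵥ z) = 0 := h2'.symm
    rw [hconj, hc] at hzero
    have : c = 0 := by
      rw [show (star c) = (starRingEnd ℂ) c from rfl, Complex.mul_conj] at hzero
      exact Complex.normSq_eq_zero.mp (by exact_mod_cast hzero)
    exact hv (by simp [this])
  -- rewrite the matrix as B - algebraMap 1
  have hMeq : Matrix.vecMulVec z (star z) - (1 - A)
      = B - algebraMap ℂ (Matrix (Fin n) (Fin n) ℂ) 1 := by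
    rw [show (algebraMap ℂ (Matrix (Fin n) (Fin n) ℂ)) 1 = 1 from _root_.map_one _, hB]; abel
  rw [hMeq, ← spectrum.sub_singleton_eq] at hμ
  rw [Set.mem_sub] at hμ
  obtain ⟨lam, hlam, o, ho, rfl⟩ := hμ
  rw [Set.mem_singleton_iff] at ho
  subst ho
  -- spectrum of B is the range of eigenvalues
  have hspec : spectrum ℂ B = Set.range (fun i => (hH.eigenvalues i : ℂ)) := by
    conv_lhs => rw [hH.spectral_theorem]
    have := spectrum.units_conjugate (R := ℂ)
      (a := Matrix.diagonal (RCLike.ofReal ∘ hH.eigenvalues))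
      (u := Unitary.toUnits hH.eigenvectorUnitary)
    rw [show ((Unitary.toUnits hH.eigenvectorUnitary : _ˣ) : Matrix (Fin n) (Fin n) ℂ)
        = (hH.eigenvectorUnitary : Matrix (Fin n) (Fin n) ℂ) from rfl] at this
    rw [show ((Unitary.toUnits hH.eigenvectorUnitary)⁻¹ : _ˣ).val
        = star (hH.eigenvectorUnitary : Matrix (Fin n) (Fin n) ℂ) from rfl] at this
    rw [Unitary.conjStarAlgAut_apply, this, spectrum_diagonal]
    ext x
    constructor
    · rintro ⟨i, rfl⟩; exact ⟨i, rfl⟩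
    · rintro ⟨i, rfl⟩; exact ⟨i, rfl⟩
  rw [hspec] at hlam
  obtain ⟨i, rfl⟩ := hlam
  have hpos : 0 < hH.eigenvalues i := hBpd.eigenvalues_pos i
  have hle : hH.eigenvalues i ≤ 1 := hmax_le i
  have : ((hH.eigenvalues i : ℂ) - 1) = ((hH.eigenvalues i - 1 : ℝ) : ℂ) := by
    push_cast; ring
  rw [this, Complex.norm_real, Real.norm_eq_abs, abs_lt]
  constructor <;> linarith
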